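/- Let F ⊆ E be linear acyclic and let x, y : E → ℝ both be F-tight. Then the difference multigraph D_{x,y} contains no directed cycle. -/

import Mathlib

open Finset

/-- if `F` is linear acyclic (its linear arcs contain no undirected cycle)
and `x, y` are both `F`-tight, then the difference multigraph `D_{x,y}` (arcs `e` with
`x_e ≠ y_e`, oriented from `tail e` to `head e` if `x_e > y_e` and reversed otherwise)
contains no directed cycle (no cyclic sequence of its arcs with pairwise distinct start
vertices, consecutive endpoints matching). -/
theorem stmt_8 {V E : Type*} [Fintype V] [Fintype E]
    (tail head : E → V) (C C' : E → ℝ → ℝ)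
    (hconv : ∀ a, ConvexOn ℝ Set.univ (C a))
    (hderiv : ∀ a t, HasDerivAt (C a) (C' a t) t)
    (hdich : ∀ a, (∃ γ, ∀ t, C' a t = γ) ∨ StrictMono (C' a))
    (F : Finset E)
    (hacyc : ¬ ∃ k : ℕ, ∃ (c : Fin (k + 1) → E) (s : Fin (k + 1) → Bool),
      (∀ i, c i ∈ F ∧ ∃ γ, ∀ t, C' (c i) t = γ) ∧
      Function.Injective c ∧
      Function.Injective (fun i => if s i then tail (c i) else head (c i)) ∧
      ∀ i : Fin (k + 1), (if s i then head (c i) else tail (c i)) =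
        (if s (i + 1) then tail (c (i + 1)) else head (c (i + 1))))
    (x y : E → ℝ)
    (hx0 : ∀ a, a ∉ F → x a = 0) (hy0 : ∀ a, a ∉ F → y a = 0)
    (πx : V → ℝ) (hπx : ∀ a ∈ F, πx (head a) - πx (tail a) = C' a (x a))
    (πy : V → ℝ) (hπy : ∀ a ∈ F, πy (head a) - πy (tail a) = C' a (y a)) :
    ¬ ∃ k : ℕ, ∃ c : Fin (k + 1) → {e : E // x e ≠ y e},
      Function.Injective
        (fun i => if y (c i).1 < x (c i).1 then tail (c i).1 else head (c i).1) ∧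
      ∀ i : Fin (k + 1),
        (if y (c i).1 < x (c i).1 then head (c i).1 else tail (c i).1) =
          (if y (c (i + 1)).1 < x (c (i + 1)).1 then tail (c (i + 1)).1
            else head (c (i + 1)).1) := by
  rintro ⟨k, c, hinj, hcyc⟩
  apply hacyc
  have hmem : ∀ i : Fin (k+1), (c i).1 ∈ F := by
    intro i
    by_contra h
    exact (c i).2 (by rw [hx0 _ h, hy0 _ h])
  classical
  set π : V → ℝ := fun v => πx v - πy v with hπ
  set st : Fin (k+1) → V :=
    fun i => if y (c i).1 < x (c i).1 then tail (c i).1 else head (c i).1 with hst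
  set en : Fin (k+1) → V :=
    fun i => if y (c i).1 < x (c i).1 then head (c i).1 else tail (c i).1 with hen
  have hterm : ∀ i, π (en i) - π (st i) =
      if y (c i).1 < x (c i).1 then C' (c i).1 (x (c i).1) - C' (c i).1 (y (c i).1)
      else C' (c i).1 (y (c i).1) - C' (c i).1 (x (c i).1) := by
    intro i
    have hx' := hπx _ (hmem i)
    have hy' := hπy _ (hmem i)
    by_cases h : y (c i).1 < x (c i).1
    · simp only [hst, hen, hπ, if_pos h]; linarith
    · simp only [hst, hen, hπ, if_neg h]; linarith
  have hnn : ∀ i, 0 ≤ π (en i) - π (st i) := by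
    intro i
    rw [hterm i]
    rcases hdich (c i).1 with ⟨γ, hγ⟩ | hsm
    · simp [hγ]
    · by_cases h : y (c i).1 < x (c i).1
      · rw [if_pos h]; linarith [hsm h]
      · have h' : x (c i).1 < y (c i).1 := lt_of_le_of_ne (not_lt.1 h) (c i).2
        rw [if_neg h]; linarith [hsm h']
  have hsum : ∑ i : Fin (k+1), (π (en i) - π (st i)) = 0 := by
    have hes : ∀ i, en i = st (i + 1) := hcyc
    calc ∑ i, (π (en i) - π (st i)) = ∑ i, (π (st (i+1)) - π (st i)) := by
          refine Finset.sum_congr rfl fun i _ => by rw [hes i]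
      _ = (∑ i, π (st (i+1))) - ∑ i, π (st i) := Finset.sum_sub_distrib _ _
      _ = 0 := by
          rw [sub_eq_zero]
          exact Fintype.sum_equiv (Equiv.addRight 1) _ _ (fun i => rfl)
  have hzero : ∀ i, π (en i) - π (st i) = 0 := by
    intro i
    exact (Finset.sum_eq_zero_iff_of_nonneg (fun j _ => hnn j)).1 hsum i (Finset.mem_univ i)
  have hlin : ∀ i : Fin (k+1), ∃ γ, ∀ t, C' (c i).1 t = γ := by
    intro i
    rcases hdich (c i).1 with hc | hsm
    · exact hc
    · exfalso
      have hz := hzero i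
      rw [hterm i] at hz
      by_cases h : y (c i).1 < x (c i).1
      · rw [if_pos h] at hz; have := hsm h; linarith
      · have h' : x (c i).1 < y (c i).1 := lt_of_le_of_ne (not_lt.1 h) (c i).2
        rw [if_neg h] at hz; have := hsm h'; linarith
  refine ⟨k, fun i => (c i).1, fun i => decide (y (c i).1 < x (c i).1),
    fun i => ⟨hmem i, hlin i⟩, ?_, ?_, ?_⟩
  · intro i j hij
    simp only at hij
    apply hinj
    show (if y (c i).1 < x (c i).1 then tail (c i).1 else head (c i).1) =
      (if y (c j).1 < x (c j).1 then tail (c j).1 else head (c j).1)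
    rw [hij]
  · have heq : (fun i => if decide (y (c i).1 < x (c i).1) = true then tail (c i).1
        else head (c i).1)
        = (fun i => if y (c i).1 < x (c i).1 then tail (c i).1 else head (c i).1) := by
      funext i; simp
    simpa [heq] using hinj
  · intro i
    have := hcyc i
    simpa using this
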